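/- Let G be an ε-free VW-CCG grammar with maximal rule degree d and maximal number of arguments γ among lexicon categories, and let τ be a derivation tree for a string w. Then every category labeling a node of τ has at most γ + d·(|w| − 1) arguments on its argument stack. -/

import Mathlib

/-- Categories of VW-CCG over atomic categories coded by natural numbers.
`slash d X Y` is `X /ᵈ Y` where `d = true` is a forward slash `/` and
`d = false` is a backward slash `\`. -/
inductive Cat : Type where
  | atom : ℕ → Cat
  | slash : Bool → Cat → Cat → Cat
deriving DecidableEq

namespace Cat

/-- The target (innermost atomic category). -/
def target : Cat → ℕ
  | atom a => a
  | slash _ X _ => X.target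

/-- The argument stack of a category, bottom of the stack first. -/
def args : Cat → List (Bool × Cat)
  | atom _ => []
  | slash d X Y => X.args ++ [(d, Y)]

/-- The number of arguments of a category. -/
def numArgs (X : Cat) : ℕ := X.args.length

/-- The size (number of symbols) of a category. -/
def size : Cat → ℕ
  | atom _ => 1
  | slash _ X Y => X.size + Y.size + 1

/-- `ArgOccurs p X` holds if the slash–category pair `p` occurs as an
argument somewhere inside the category `X`. -/
def ArgOccurs (p : Bool × Cat) : Cat → Prop
  | atom _ => False
  | slash d X Y => (d, Y) = p ∨ ArgOccurs p X ∨ ArgOccurs p Y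

end Cat

/-- Build `A /₁ X₁ ⋯ /ₘ Xₘ` from a target and an argument list. -/
def Cat.mk' (t : ℕ) (as : List (Bool × Cat)) : Cat :=
  as.foldl (fun c p => Cat.slash p.1 c p.2) (Cat.atom t)

/-- Push additional arguments on the stack of a category. -/
def appendArgs (X : Cat) (zs : List (Bool × Cat)) : Cat :=
  zs.foldl (fun c p => Cat.slash p.1 c p.2) X

/-- A VW-CCG combinatory rule: a (forward or backward) combinatory schema of
degree `zRestr.length`, optionally restricting the target of the variable `X`,
the category `Y`, and the slashes and categories of the arguments
`/₁ Z₁ ⋯ /_d Z_d` of the secondary input. -/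
structure Rule where
  fwd : Bool
  tRestr : Option ℕ
  yRestr : Option Cat
  zRestr : List (Bool × Option Cat)

/-- The degree of a rule. -/
def Rule.degree (r : Rule) : ℕ := r.zRestr.length

/-- `r.Inst L R O` holds if `L R ⇛ O` is a ground instance of the rule `r`:
forward: `X/Y  Y/₁Z₁⋯/_dZ_d ⇛ X/₁Z₁⋯/_dZ_d`;
backward: `Y/₁Z₁⋯/_dZ_d  X\Y ⇛ X/₁Z₁⋯/_dZ_d`, respecting the restrictions. -/
def Rule.Inst (r : Rule) (L R O : Cat) : Prop :=
  ∃ (X Y : Cat) (zs : List (Bool × Cat)),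
    (∀ t, r.tRestr = some t → X.target = t) ∧
    (∀ Y', r.yRestr = some Y' → Y = Y') ∧
    List.Forall₂ (fun (p : Bool × Option Cat) (z : Bool × Cat) =>
      z.1 = p.1 ∧ ∀ Z, p.2 = some Z → z.2 = Z) r.zRestr zs ∧
    O = appendArgs X zs ∧
    (if r.fwd then L = Cat.slash true X Y ∧ R = appendArgs Y zs
     else R = Cat.slash false X Y ∧ L = appendArgs Y zs)

/-- A VW-CCG grammar: a finite lexicon assigning categories to vocabulary
symbols (coded by naturals) or to the empty string (`none`), a finite set of
combinatory rules, and a distinguished atomic category. -/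
structure Grammar where
  lex : List (Option ℕ × Cat)
  rules : List Rule
  start : ℕ

/-- A grammar is ε-free if no lexicon entry is for the empty string. -/
def Grammar.EpsFree (G : Grammar) : Prop := ∀ e ∈ G.lex, e.1 ≠ none

/-- Derivation trees: leaves carry lexicon entries (`none` = empty string),
internal nodes carry categories and have exactly two children. -/
inductive DTree where
  | leaf : Option ℕ → Cat → DTree
  | node : Cat → DTree → DTree → DTree

namespace DTree

/-- The category at the root. -/
def top : DTree → Cat
  | leaf _ X => X
  | node X _ _ => X

/-- The yield: left-to-right concatenation of the symbols at the leaves. -/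
def yield : DTree → List ℕ
  | leaf none _ => []
  | leaf (some σ) _ => [σ]
  | node _ l r => l.yield ++ r.yield

/-- The total number of nodes. -/
def nodes : DTree → ℕ
  | leaf _ _ => 1
  | node _ l r => l.nodes + r.nodes + 1

/-- `τ.Valid G`: `τ` is a derivation tree of the grammar `G`. -/
def Valid (G : Grammar) : DTree → Prop
  | leaf σ X => (σ, X) ∈ G.lex
  | node X l r => Valid G l ∧ Valid G r ∧ ∃ rl ∈ G.rules, rl.Inst l.top r.top X

/-- `τ.CatAt C`: the category `C` labels some node of `τ`. -/
def CatAt : DTree → Cat → Prop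
  | leaf _ X, C => C = X
  | node X l r, C => C = X ∨ l.CatAt C ∨ r.CatAt C

end DTree

/-- The language generated by a grammar. -/
def Grammar.Lang (G : Grammar) : Set (List ℕ) :=
  { w | ∃ τ : DTree, τ.Valid G ∧ τ.top = Cat.atom G.start ∧ τ.yield = w }

lemma numArgs_appendArgs (zs : List (Bool × Cat)) : ∀ X : Cat,
    (appendArgs X zs).numArgs = X.numArgs + zs.length := by
  induction zs with
  | nil => intro X; simp [appendArgs]
  | cons p zs ih =>
    intro X
    have := ih (Cat.slash p.1 X p.2)
    simp [appendArgs, List.foldl_cons] at this ⊢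
    rw [this]
    simp [Cat.numArgs, Cat.args]
    omega

lemma yield_pos (G : Grammar) (hG : G.EpsFree) :
    ∀ τ : DTree, τ.Valid G → 1 ≤ τ.yield.length := by
  intro τ
  induction τ with
  | leaf σ X =>
    intro h
    have := hG (σ, X) h
    cases σ with
    | none => exact absurd rfl this
    | some s => simp [DTree.yield]
  | node X l r ihl ihr =>
    intro h
    obtain ⟨hl, hr, _⟩ := h
    have := ihl hl
    simp [DTree.yield]
    omega

lemma catAt_top : ∀ τ : DTree, τ.CatAt τ.top := by
  intro τ; cases τ <;> simp [DTree.CatAt, DTree.top]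

/-- In an ε-free VW-CCG grammar with maximal rule degree `d` and maximal
number of lexicon arguments `γ`, every category labeling a node of a
derivation tree for `w` has at most `γ + d·(|w| − 1)` arguments. -/
theorem numArgs_le (G : Grammar) (d γ : ℕ)
    (hd : ∀ r ∈ G.rules, r.degree ≤ d)
    (hγ : ∀ e ∈ G.lex, e.2.numArgs ≤ γ)
    (hG : G.EpsFree)
    (τ : DTree) (hτ : τ.Valid G) (w : List ℕ) (hw : τ.yield = w) :
    ∀ C : Cat, τ.CatAt C → C.numArgs ≤ γ + d * (w.length - 1) := by
  subst hw
  induction τ with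
  | leaf σ X =>
    intro C hC
    simp [DTree.CatAt] at hC
    subst hC
    exact le_trans (hγ (σ, C) hτ) (Nat.le_add_right _ _)
  | node X l r ihl ihr =>
    obtain ⟨hl, hr, rl, hrl, hinst⟩ := hτ
    have hnl := yield_pos G hG l hl
    have hnr := yield_pos G hG r hr
    set nl := l.yield.length with hnl'
    set nr := r.yield.length with hnr'
    have hlen : (DTree.node X l r).yield.length = nl + nr := by
      simp [DTree.yield]
      rfl
    intro C hC
    rw [hlen]
    rcases hC with hC | hC | hC
    · -- root
      subst hC
      obtain ⟨X', Y, zs, _, _, hf₂, hO, hif⟩ := hinst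
      have hzlen : zs.length ≤ d := by
        have := List.Forall₂.length_eq hf₂
        have := hd rl hrl
        simp [Rule.degree] at this
        omega
      have hXn : C.numArgs = X'.numArgs + zs.length := by
        rw [hO, numArgs_appendArgs]
      by_cases hfwd : rl.fwd
      · simp [hfwd] at hif
        obtain ⟨hL, _⟩ := hif
        have hprim : l.top.numArgs ≤ γ + d * (nl - 1) :=
          ihl hl l.top (catAt_top l)
        rw [hL] at hprim
        have : l.top.numArgs = X'.numArgs + 1 := by
          rw [hL]; simp [Cat.numArgs, Cat.args]
        rw [hL] at this
        have hmul : d * ((nl - 1) + 1) ≤ d * (nl + nr - 1) := by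
          apply Nat.mul_le_mul_left
          omega
        rw [Nat.mul_add, Nat.mul_one] at hmul
        omega
      · simp [hfwd] at hif
        obtain ⟨hR, _⟩ := hif
        have hprim : r.top.numArgs ≤ γ + d * (nr - 1) :=
          ihr hr r.top (catAt_top r)
        rw [hR] at hprim
        have : (Cat.slash false X' Y).numArgs = X'.numArgs + 1 := by
          simp [Cat.numArgs, Cat.args]
        have hmul : d * ((nr - 1) + 1) ≤ d * (nl + nr - 1) := by
          apply Nat.mul_le_mul_left
          omega
        rw [Nat.mul_add, Nat.mul_one] at hmul
        omega
    · have := ihl hl C hC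
      have hmul : d * (nl - 1) ≤ d * (nl + nr - 1) := by
        apply Nat.mul_le_mul_left; omega
      omega
    · have := ihr hr C hC
      have hmul : d * (nr - 1) ≤ d * (nl + nr - 1) := by
        apply Nat.mul_le_mul_left; omega
      omega
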